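/- Blind background agreement with rewrite-class disagreement: for tokens with t_s ≠ t_b, pairwise distinct t_s', t_{b1}, t_{b2}, rationals slo ≤ shi and blo < bhi, and dimension tag d, the expressions e₁ = Sub (Add (Meas t_s slo shi d) (Meas t_b blo bhi d)) (Meas t_b blo bhi d) and e₂ = Sub (Add (Meas t_s' slo shi d) (Meas t_{b1} blo bhi d)) (Meas t_{b2} blo bhi d) satisfy forgetTokens e₁ = forgetTokens e₂ (hence BlindEncl (forgetTokens e₁) = BlindEncl (forgetTokens e₂)), yet Interchangeable e₁ (Meas t_s slo shi d) holds while OneWayOnly e₂ (Meas t_s' slo shi d) holds. -/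
import Mathlib


abbrev Token := ℕ

inductive Dim where
  | base
deriving DecidableEq

inductive Expr where
  | Exact (q : ℚ) (d : Dim)
  | Meas (t : Token) (lo hi : ℚ) (d : Dim)
  | Add (a b : Expr)
  | Sub (a b : Expr)
  | Mul (a b : Expr)
  | Div (a b : Expr)
  | Neg (a : Expr)

abbrev TokenEnv := Token → ℚ

def TokenConsistent (σ : TokenEnv) : Expr → Prop
  | .Exact _ _ => True
  | .Meas t lo hi _ => lo ≤ σ t ∧ σ t ≤ hi
  | .Add a b => TokenConsistent σ a ∧ TokenConsistent σ b
  | .Sub a b => TokenConsistent σ a ∧ TokenConsistent σ b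
  | .Mul a b => TokenConsistent σ a ∧ TokenConsistent σ b
  | .Div a b => TokenConsistent σ a ∧ TokenConsistent σ b
  | .Neg a => TokenConsistent σ a

def eval (σ : TokenEnv) : Expr → ℚ
  | .Exact q _ => q
  | .Meas t _ _ _ => σ t
  | .Add a b => eval σ a + eval σ b
  | .Sub a b => eval σ a - eval σ b
  | .Mul a b => eval σ a * eval σ b
  | .Div a b => eval σ a / eval σ b
  | .Neg a => - eval σ a

def Encl (e : Expr) : Set ℚ := {v : ℚ | ∃ σ : TokenEnv, TokenConsistent σ e ∧ eval σ e = v}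

def RewritesTo (e e' : Expr) : Prop := Encl e' ⊆ Encl e

def Interchangeable (e e' : Expr) : Prop := Encl e = Encl e'

def OneWayOnly (e e' : Expr) : Prop := RewritesTo e e' ∧ ¬ RewritesTo e' e

inductive BlindExpr where
  | BlindExact (q : ℚ) (d : Dim)
  | BlindMeas (lo hi : ℚ) (d : Dim)
  | Add (a b : BlindExpr)
  | Sub (a b : BlindExpr)
  | Mul (a b : BlindExpr)
  | Div (a b : BlindExpr)
  | Neg (a : BlindExpr)

def forgetTokens : Expr → BlindExpr
  | .Exact q d => .BlindExact q d
  | .Meas _ lo hi d => .BlindMeas lo hi d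
  | .Add a b => .Add (forgetTokens a) (forgetTokens b)
  | .Sub a b => .Sub (forgetTokens a) (forgetTokens b)
  | .Mul a b => .Mul (forgetTokens a) (forgetTokens b)
  | .Div a b => .Div (forgetTokens a) (forgetTokens b)
  | .Neg a => .Neg (forgetTokens a)

def BlindEncl : BlindExpr → Set ℚ
  | .BlindExact q _ => {q}
  | .BlindMeas lo hi _ => {v : ℚ | lo ≤ v ∧ v ≤ hi}
  | .Add a b => {v : ℚ | ∃ x ∈ BlindEncl a, ∃ y ∈ BlindEncl b, x + y = v}
  | .Sub a b => {v : ℚ | ∃ x ∈ BlindEncl a, ∃ y ∈ BlindEncl b, x - y = v}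
  | .Mul a b => {v : ℚ | ∃ x ∈ BlindEncl a, ∃ y ∈ BlindEncl b, x * y = v}
  | .Div a b => {v : ℚ | ∃ x ∈ BlindEncl a, ∃ y ∈ BlindEncl b, x / y = v}
  | .Neg a => {v : ℚ | ∃ x ∈ BlindEncl a, -x = v}

theorem blind_background_patterns_agree_but_rewrite_classes_differ
    (ts tb ts' tb₁ tb₂ : Token) (hne : ts ≠ tb)
    (h₁ : ts' ≠ tb₁) (h₂ : ts' ≠ tb₂) (h₃ : tb₁ ≠ tb₂)
    (slo shi blo bhi : ℚ) (hs : slo ≤ shi) (hb : blo < bhi) (d : Dim) :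
    forgetTokens (Expr.Sub (.Add (.Meas ts slo shi d) (.Meas tb blo bhi d)) (.Meas tb blo bhi d))
      = forgetTokens (Expr.Sub (.Add (.Meas ts' slo shi d) (.Meas tb₁ blo bhi d)) (.Meas tb₂ blo bhi d)) ∧
    BlindEncl (forgetTokens (Expr.Sub (.Add (.Meas ts slo shi d) (.Meas tb blo bhi d)) (.Meas tb blo bhi d)))
      = BlindEncl (forgetTokens (Expr.Sub (.Add (.Meas ts' slo shi d) (.Meas tb₁ blo bhi d)) (.Meas tb₂ blo bhi d))) ∧
    Interchangeable
      (.Sub (.Add (.Meas ts slo shi d) (.Meas tb blo bhi d)) (.Meas tb blo bhi d))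
      (.Meas ts slo shi d) ∧
    OneWayOnly
      (.Sub (.Add (.Meas ts' slo shi d) (.Meas tb₁ blo bhi d)) (.Meas tb₂ blo bhi d))
      (.Meas ts' slo shi d) := by
  refine ⟨rfl, rfl, ?_, ?_, ?_⟩
  · ext v
    constructor
    · rintro ⟨σ, ⟨⟨⟨hs1, hs2⟩, hb1, hb2⟩, hb3, hb4⟩, hv⟩
      simp only [eval] at hv
      exact ⟨σ, ⟨hs1, hs2⟩, by rw [← hv]; simp [eval]⟩
    · rintro ⟨σ, ⟨hs1, hs2⟩, hv⟩
      simp only [eval] at hv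
      refine ⟨fun t => if t = ts then σ ts else blo, ?_, ?_⟩
      · refine ⟨⟨⟨?_, ?_⟩, ?_, ?_⟩, ?_, ?_⟩ <;>
          simp [Ne.symm hne, hs1, hs2, hb.le, le_refl]
      · simp [eval, Ne.symm hne, hv]
  · rintro v ⟨σ, ⟨hs1, hs2⟩, hv⟩
    simp only [eval] at hv
    refine ⟨fun t => if t = ts' then σ ts' else blo, ?_, ?_⟩
    · refine ⟨⟨⟨?_, ?_⟩, ?_, ?_⟩, ?_, ?_⟩ <;>
        simp [Ne.symm h₁, Ne.symm h₂, hs1, hs2, hb.le, le_refl]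
    · simp [eval, Ne.symm h₁, Ne.symm h₂, hv]
  · intro h
    have hmem : (shi + (bhi - blo)) ∈ Encl (.Sub (.Add (.Meas ts' slo shi d) (.Meas tb₁ blo bhi d)) (.Meas tb₂ blo bhi d)) := by
      refine ⟨fun t => if t = ts' then shi else if t = tb₁ then bhi else blo, ?_, ?_⟩
      · refine ⟨⟨⟨?_, ?_⟩, ?_, ?_⟩, ?_, ?_⟩ <;>
          simp [Ne.symm h₁, Ne.symm h₂, Ne.symm h₃, hs, hb.le, le_refl]
      · simp [eval, Ne.symm h₁, Ne.symm h₂, Ne.symm h₃]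
        ring
    obtain ⟨σ, ⟨hs1, hs2⟩, hv⟩ := h hmem
    simp only [eval] at hv
    rw [hv] at hs2
    linarith
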